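/- Assume u* ≤ u_max/4 and let C ≥ 0, D ≥ 0. Then for every s ∈ [0, u_max] and every z ∈ ℐ_b one has g(s, z) ≥ g(s, û) and k(s, z) ≥ k(s, û); consequently the constraint set of the compound (stability-and-invariance) left-boundary problem, {s ∈ 𝒞_a : (∃ z₁ ∈ ℐ_b, g(s, z₁) ≤ −C) and (∃ z₂ ∈ ℐ_b, k(s, z₂) ≤ D)}, equals {s ∈ 𝒞_a : g(s, û) ≤ −C and k(s, û) ≤ D}. -/
import Mathlib


/-- Compound (stability-and-invariance) left-boundary problem: if
`u* ≤ u_max/4` and `C, D ≥ 0`, then for every `s ∈ [0, u_max]` and every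
`z ∈ ℐ_b = [u_max/4, u_max]` one has `g(s, z) ≥ g(s, û)` and
`k(s, z) ≥ k(s, û)`; consequently the compound constraint set
`{s ∈ 𝒞_a : (∃ z₁ ∈ ℐ_b, g(s, z₁) ≤ -C) ∧ (∃ z₂ ∈ ℐ_b, k(s, z₂) ≤ D)}`
equals `{s ∈ 𝒞_a : g(s, û) ≤ -C ∧ k(s, û) ≤ D}`. -/
theorem compound_left_boundary_constraint_set
    (umax ustar uhat : ℝ) (f F : ℝ → ℝ) (g k : ℝ → ℝ → ℝ)
    (humax : 0 < umax)
    (hustar : ustar ∈ Set.Icc (0 : ℝ) umax)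
    (hustar_le : ustar ≤ umax / 4)
    (huhat : uhat = umax / 2)
    (hf : ∀ u : ℝ, f u = u * (1 - u / umax))
    (hF : ∀ u : ℝ, F u = u ^ 2 / 2 - u ^ 3 / (3 * umax))
    (hg : ∀ s z : ℝ, g s z = (s - ustar) * f s - (z - ustar) * f z - F s + F z)
    (hk : ∀ s z : ℝ, k s z = s * f s - z * f z - F s + F z)
    (C D : ℝ) (hC : 0 ≤ C) (hD : 0 ≤ D) :
    (∀ s ∈ Set.Icc (0 : ℝ) umax, ∀ z ∈ Set.Icc (umax / 4) umax,
      g s uhat ≤ g s z ∧ k s uhat ≤ k s z) ∧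
    {s ∈ Set.Icc (0 : ℝ) ((2 * ustar + umax) / 4) |
        (∃ z₁ ∈ Set.Icc (umax / 4) umax, g s z₁ ≤ -C) ∧
        (∃ z₂ ∈ Set.Icc (umax / 4) umax, k s z₂ ≤ D)} =
      {s ∈ Set.Icc (0 : ℝ) ((2 * ustar + umax) / 4) |
        g s uhat ≤ -C ∧ k s uhat ≤ D} := by
  have hu : (0:ℝ) < umax := humax
  obtain ⟨ha0, _⟩ := hustar
  have key : ∀ z ∈ Set.Icc (umax / 4) umax,
      (∀ s, g s uhat ≤ g s z) ∧ (∀ s, k s uhat ≤ k s z) := by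
    intro z hz
    obtain ⟨hz1, hz2⟩ := hz
    constructor
    · intro s
      rw [← sub_nonneg]
      have hne : umax ≠ 0 := hu.ne'
      have hid : g s z - g s uhat
          = (2*z - umax)^2 * (4*z + umax - 6*ustar) / (24*umax) := by
        simp only [hg, hf, hF, huhat]; field_simp; ring
      rw [hid]
      exact div_nonneg (mul_nonneg (sq_nonneg _) (by nlinarith)) (by linarith)
    · intro s
      rw [← sub_nonneg]
      have hne : umax ≠ 0 := hu.ne'
      have hid : k s z - k s uhat
          = (2*z - umax)^2 * (4*z + umax) / (24*umax) := by
        simp only [hk, hf, hF, huhat]; field_simp; ring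
      rw [hid]
      exact div_nonneg (mul_nonneg (sq_nonneg _) (by nlinarith)) (by linarith)
  have hhat : uhat ∈ Set.Icc (umax / 4) umax := by
    rw [huhat]; constructor <;> linarith
  constructor
  · intro s _ z hz
    exact ⟨(key z hz).1 s, (key z hz).2 s⟩
  · ext s
    simp only [Set.mem_setOf_eq]
    constructor
    · rintro ⟨hs, ⟨z₁, hz₁, hg1⟩, ⟨z₂, hz₂, hk2⟩⟩
      exact ⟨hs, le_trans ((key z₁ hz₁).1 s) hg1, le_trans ((key z₂ hz₂).2 s) hk2⟩
    · rintro ⟨hs, h1, h2⟩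
      exact ⟨hs, ⟨uhat, hhat, h1⟩, ⟨uhat, hhat, h2⟩⟩
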